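/- Let H be a complex Hilbert space and let S be a normal bounded linear operator on H with Cartesian decomposition S = A + iC such that a₁ ≤ A ≤ a₂ and c₁ ≤ C ≤ c₂ for real numbers a₁, a₂, c₁, c₂. Set z = (a₁+a₂)/2 + i(c₁+c₂)/2. Then ‖S − z·I‖ ≤ √((a₂−a₁)²/2 + (c₂−c₁)²/2). -/

import Mathlib

open ContinuousLinearMap in
lemma key_selfadjoint_norm_le
    {H : Type*} [NormedAddCommGroup H] [InnerProductSpace ℂ H] [CompleteSpace H]
    (T : H →L[ℂ] H) (hT : IsSelfAdjoint T) (M : ℝ) (hM : 0 ≤ M)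
    (h : ∀ x : H, |(inner ℂ (T x) x : ℂ).re| ≤ M * ‖x‖ ^ 2) : ‖T‖ ≤ M := by
  have hsymm : ∀ x y : H, (inner ℂ (T x) y : ℂ) = inner ℂ x (T y) :=
    (isSelfAdjoint_iff_isSymmetric.mp hT)
  apply T.opNorm_le_bound hM
  intro x
  by_cases hx : T x = 0
  · simp only [hx, norm_zero]
    positivity
  have hTx : (0:ℝ) < ‖T x‖ := norm_pos_iff.mpr hx
  have hx0 : x ≠ 0 := fun h0 => hx (by simp [h0])
  have hxn : (0:ℝ) < ‖x‖ := norm_pos_iff.mpr hx0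
  set y : H := ((‖x‖ / ‖T x‖ : ℝ) : ℂ) • T x with hy
  have hyn : ‖y‖ = ‖x‖ := by
    rw [hy, norm_smul]
    simp [abs_of_nonneg (div_nonneg hxn.le hTx.le), div_mul_cancel₀, hTx.ne']
  have hre : (inner ℂ (T x) y : ℂ).re = ‖x‖ * ‖T x‖ := by
    rw [hy, inner_smul_right]
    have h1 : (inner ℂ (T x) (T x) : ℂ).re = ‖T x‖ ^ 2 := by
      exact_mod_cast @inner_self_eq_norm_sq ℂ _ _ _ _ (T x)
    have h2 : (inner ℂ (T x) (T x) : ℂ).im = 0 := inner_self_im (𝕜 := ℂ) (T x)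
    rw [Complex.mul_re, h1, h2, Complex.ofReal_re]
    field_simp
    ring
  have hre2 : (inner ℂ (T y) x : ℂ).re = ‖x‖ * ‖T x‖ := by
    rw [hsymm y x, ← inner_conj_symm, Complex.conj_re, hre]
  have hplus := h (x + y)
  have hminus := h (x - y)
  have hexp : (inner ℂ (T (x+y)) (x+y) : ℂ).re - (inner ℂ (T (x-y)) (x-y) : ℂ).re
      = 4 * (‖x‖ * ‖T x‖) := by
    rw [map_add, map_sub]
    simp only [inner_add_left, inner_add_right, inner_sub_left, inner_sub_right,
      Complex.add_re, Complex.sub_re]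
    rw [hre, hre2]; ring
  have hpar := parallelogram_law_with_norm ℂ x y
  have h1 : (inner ℂ (T (x+y)) (x+y) : ℂ).re ≤ M * ‖x + y‖ ^ 2 :=
    le_trans (le_abs_self _) (hplus)
  have h2 : -(M * ‖x - y‖ ^ 2) ≤ (inner ℂ (T (x-y)) (x-y) : ℂ).re :=
    neg_le_of_abs_le hminus
  have hpar2 : ‖x + y‖ ^ 2 + ‖x - y‖ ^ 2 = 4 * ‖x‖ ^ 2 := by nlinarith [hpar, hyn]
  have : 4 * (‖x‖ * ‖T x‖) ≤ 4 * M * ‖x‖ ^ 2 := by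
    rw [← hexp]
    calc (inner ℂ (T (x+y)) (x+y) : ℂ).re - (inner ℂ (T (x-y)) (x-y) : ℂ).re
        ≤ M * ‖x + y‖ ^ 2 + M * ‖x - y‖ ^ 2 := by linarith
      _ = M * (‖x + y‖ ^ 2 + ‖x - y‖ ^ 2) := by ring
      _ = 4 * M * ‖x‖ ^ 2 := by rw [hpar2]; ring
  nlinarith

lemma re_inner_sub_smul_one
    {H : Type*} [NormedAddCommGroup H] [InnerProductSpace ℂ H]
    (T : H →L[ℂ] H) (t : ℝ) (x : H) :
    (inner ℂ ((T - ((t:ℂ)) • (1 : H →L[ℂ] H)) x) x : ℂ).re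
      = (inner ℂ (T x) x : ℂ).re - t * ‖x‖ ^ 2 := by
  have h1 : (inner ℂ x x : ℂ).re = ‖x‖ ^ 2 := by
    exact_mod_cast @inner_self_eq_norm_sq ℂ _ _ _ _ x
  have h2 : (inner ℂ x x : ℂ).im = 0 := inner_self_im (𝕜 := ℂ) x
  simp only [ContinuousLinearMap.sub_apply, ContinuousLinearMap.smul_apply,
    ContinuousLinearMap.one_apply, inner_sub_left, inner_smul_left,
    Complex.sub_re, Complex.mul_re, Complex.conj_ofReal, Complex.ofReal_re,
    Complex.ofReal_im, h1, h2]
  ring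

lemma smul_one_selfadjoint
    {H : Type*} [NormedAddCommGroup H] [InnerProductSpace ℂ H] [CompleteSpace H]
    (t : ℝ) : IsSelfAdjoint (((t:ℂ)) • (1 : H →L[ℂ] H)) := by
  rw [IsSelfAdjoint, star_smul, star_one, Complex.star_def, Complex.conj_ofReal]



/-- For a normal operator `S = A + iC` with `a₁ ≤ A ≤ a₂`, `c₁ ≤ C ≤ c₂`,
and `z = (a₁+a₂)/2 + i(c₁+c₂)/2`, we have `‖S − z·I‖ ≤ √((a₂−a₁)²/2 + (c₂−c₁)²/2)`. -/
theorem norm_sub_center_smul_id_le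
    {H : Type*} [NormedAddCommGroup H] [InnerProductSpace ℂ H] [CompleteSpace H]
    (S A C : H →L[ℂ] H) (hS : IsStarNormal S)
    (hA : IsSelfAdjoint A) (hC : IsSelfAdjoint C)
    (hSdec : S = A + Complex.I • C)
    (a₁ a₂ c₁ c₂ : ℝ)
    (hA₁ : ∀ x : H, a₁ * ‖x‖ ^ 2 ≤ (inner ℂ (A x) x : ℂ).re)
    (hA₂ : ∀ x : H, (inner ℂ (A x) x : ℂ).re ≤ a₂ * ‖x‖ ^ 2)
    (hC₁ : ∀ x : H, c₁ * ‖x‖ ^ 2 ≤ (inner ℂ (C x) x : ℂ).re)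
    (hC₂ : ∀ x : H, (inner ℂ (C x) x : ℂ).re ≤ c₂ * ‖x‖ ^ 2) :
    ‖S - ((((a₁ + a₂) / 2 : ℝ) : ℂ) + Complex.I * (((c₁ + c₂) / 2 : ℝ) : ℂ)) • (1 : H →L[ℂ] H)‖ ≤
      Real.sqrt ((a₂ - a₁) ^ 2 / 2 + (c₂ - c₁) ^ 2 / 2) := by
  by_cases htriv : ∀ x : H, x = 0
  · apply ContinuousLinearMap.opNorm_le_bound _ (Real.sqrt_nonneg _)
    intro x
    rw [htriv x]
    simp
  push_neg at htriv
  obtain ⟨x₀, hx₀⟩ := htriv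
  have hx₀n : (0:ℝ) < ‖x₀‖ ^ 2 := pow_pos (norm_pos_iff.mpr hx₀) 2
  have hpq : a₁ ≤ a₂ ∧ c₁ ≤ c₂ := by
    constructor
    · have := le_trans (hA₁ x₀) (hA₂ x₀); nlinarith
    · have := le_trans (hC₁ x₀) (hC₂ x₀); nlinarith
  set α : ℝ := (a₁ + a₂) / 2
  set γ : ℝ := (c₁ + c₂) / 2
  set T₁ : H →L[ℂ] H := A - ((α:ℂ)) • 1
  set T₂ : H →L[ℂ] H := C - ((γ:ℂ)) • 1
  have hdec : S - (((α:ℝ) : ℂ) + Complex.I * ((γ:ℝ) : ℂ)) • (1 : H →L[ℂ] H)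
      = T₁ + Complex.I • T₂ := by
    rw [hSdec]; simp only [T₁, T₂]; module
  have hT₁ : ‖T₁‖ ≤ (a₂ - a₁) / 2 := by
    apply key_selfadjoint_norm_le _ (hA.sub (smul_one_selfadjoint α)) _ (by linarith [hpq.1])
    intro x
    rw [re_inner_sub_smul_one]
    rw [abs_le]
    constructor
    · have := hA₁ x; simp only [α]; nlinarith
    · have := hA₂ x; simp only [α]; nlinarith
  have hT₂ : ‖T₂‖ ≤ (c₂ - c₁) / 2 := by
    apply key_selfadjoint_norm_le _ (hC.sub (smul_one_selfadjoint γ)) _ (by linarith [hpq.2])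
    intro x
    rw [re_inner_sub_smul_one]
    rw [abs_le]
    constructor
    · have := hC₁ x; simp only [γ]; nlinarith
    · have := hC₂ x; simp only [γ]; nlinarith
  have htri : ‖S - (((α:ℝ) : ℂ) + Complex.I * ((γ:ℝ) : ℂ)) • (1 : H →L[ℂ] H)‖
      ≤ (a₂ - a₁) / 2 + (c₂ - c₁) / 2 := by
    rw [hdec]
    calc ‖T₁ + Complex.I • T₂‖ ≤ ‖T₁‖ + ‖Complex.I • T₂‖ := norm_add_le _ _
      _ = ‖T₁‖ + ‖T₂‖ := by rw [norm_smul, Complex.norm_I, one_mul]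
      _ ≤ (a₂ - a₁) / 2 + (c₂ - c₁) / 2 := add_le_add hT₁ hT₂
  refine le_trans htri ?_
  have hnn : (0:ℝ) ≤ (a₂ - a₁) / 2 + (c₂ - c₁) / 2 := by linarith [hpq.1, hpq.2]
  have hsq : ((a₂ - a₁) / 2 + (c₂ - c₁) / 2) ^ 2 ≤ (a₂ - a₁) ^ 2 / 2 + (c₂ - c₁) ^ 2 / 2 := by
    nlinarith [sq_nonneg ((a₂ - a₁) - (c₂ - c₁))]
  have h := Real.sqrt_le_sqrt hsq
  rwa [Real.sqrt_sq hnn] at h
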